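/- The alternating group A₅ belongs to the class F: for every factorization 60 = a·b there exist subsets A, B ⊆ A₅ with |A| = a, |B| = b, and A₅ = AB as a unique-product factorization. -/

import Mathlib

set_option maxRecDepth 20000


def IsFactorization {G : Type*} [Group G] (A B : Finset G) : Prop :=
  ∀ g : G, ∃! p : G × G, p.1 ∈ A ∧ p.2 ∈ B ∧ p.1 * p.2 = g

section General

variable {G : Type*} [Group G] [Fintype G]

lemma isComplement_isFactorization {S T : Set G}
    (h : Subgroup.IsComplement S T) :
    IsFactorization S.toFinite.toFinset T.toFinite.toFinset := by
  intro g
  obtain ⟨⟨s, t⟩, hst⟩ := h.2 g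
  refine ⟨(s.1, t.1), ⟨by simp [s.2], by simp [t.2], hst⟩, ?_⟩
  rintro ⟨p1, p2⟩ ⟨hp1, hp2, hp⟩
  have := h.1 (a₁ := (⟨p1, by simpa using hp1⟩, ⟨p2, by simpa using hp2⟩)) (a₂ := (s, t))
    (by simpa using hp.trans hst.symm)
  exact Prod.ext (congrArg Subtype.val (congrArg Prod.fst this))
    (congrArg Subtype.val (congrArg Prod.snd this))

lemma right_case (H : Subgroup G) :
    ∃ A B : Finset G, A.card = Nat.card H ∧ B.card = H.index ∧ IsFactorization A B := by
  obtain ⟨T, hT, -⟩ := H.exists_isComplement_right 1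
  refine ⟨_, _, ?_, ?_, isComplement_isFactorization hT⟩
  · rw [← Set.ncard_eq_toFinset_card]
    exact Nat.card_coe_set_eq _ ▸ rfl
  · rw [← Set.ncard_eq_toFinset_card, ← Nat.card_coe_set_eq]
    exact Subgroup.IsComplement.card_right hT

lemma left_case (H : Subgroup G) :
    ∃ A B : Finset G, A.card = H.index ∧ B.card = Nat.card H ∧ IsFactorization A B := by
  obtain ⟨T, hT, -⟩ := H.exists_isComplement_left 1
  refine ⟨_, _, ?_, ?_, isComplement_isFactorization hT⟩
  · rw [← Set.ncard_eq_toFinset_card, ← Nat.card_coe_set_eq]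
    exact Subgroup.IsComplement.card_left hT
  · rw [← Set.ncard_eq_toFinset_card]
    exact Nat.card_coe_set_eq _ ▸ rfl

lemma pick_right {a b : ℕ} (hG : Nat.card G = 60) (hab : a * b = 60)
    (H : Subgroup G) (hH : Nat.card H = a) :
    ∃ A B : Finset G, A.card = a ∧ B.card = b ∧ IsFactorization A B := by
  obtain ⟨A, B, hA, hB, hf⟩ := right_case H
  have h1 : Nat.card H * H.index = 60 := by rw [Subgroup.card_mul_index, hG]
  rw [hH] at h1
  have ha : 0 < a := Nat.pos_of_ne_zero (by rintro rfl; simp at hab)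
  exact ⟨A, B, hA.trans hH, hB.trans (Nat.eq_of_mul_eq_mul_left ha (h1.trans hab.symm)), hf⟩

lemma pick_left {a b : ℕ} (hG : Nat.card G = 60) (hab : a * b = 60)
    (H : Subgroup G) (hH : Nat.card H = b) :
    ∃ A B : Finset G, A.card = a ∧ B.card = b ∧ IsFactorization A B := by
  obtain ⟨A, B, hA, hB, hf⟩ := left_case H
  have h1 : Nat.card H * H.index = 60 := by rw [Subgroup.card_mul_index, hG]
  rw [hH] at h1
  have hab' : b * a = 60 := by rw [mul_comm]; exact hab
  have hb : 0 < b := Nat.pos_of_ne_zero (by rintro rfl; simp at hab)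
  exact ⟨A, B, hA.trans (Nat.eq_of_mul_eq_mul_left hb (h1.trans hab'.symm)), hB.trans hH, hf⟩

/-- Build a subgroup from a finset closed under the group operations. -/
def mkSubgroup (s : Finset G) (h1 : (1 : G) ∈ s)
    (hmul : ∀ x ∈ s, ∀ y ∈ s, x * y ∈ s) (hinv : ∀ x ∈ s, x⁻¹ ∈ s) : Subgroup G where
  carrier := ↑s
  one_mem' := by simpa using h1
  mul_mem' := fun hx hy => hmul _ hx _ hy
  inv_mem' := fun hx => hinv _ hx

lemma mkSubgroup_card (s : Finset G) (h1 : (1 : G) ∈ s)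
    (hmul : ∀ x ∈ s, ∀ y ∈ s, x * y ∈ s) (hinv : ∀ x ∈ s, x⁻¹ ∈ s) :
    Nat.card (mkSubgroup s h1 hmul hinv) = s.card :=
  (Nat.card_coe_set_eq (↑s : Set G)).trans (Set.ncard_coe_finset s)

end General

section A5

open Equiv

abbrev G5 := ↥(alternatingGroup (Fin 5))

def el (σ : Equiv.Perm (Fin 5))
    (h : σ ∈ alternatingGroup (Fin 5) := by rw [Equiv.Perm.mem_alternatingGroup]; decide) :
    G5 := ⟨σ, h⟩

def x2 : G5 := el (swap 0 1 * swap 2 3)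
def y2 : G5 := el (swap 0 2 * swap 1 3)
def c3 : G5 := el (swap 0 1 * swap 1 2)
def c5 : G5 := el (swap 0 1 * swap 1 2 * swap 2 3 * swap 3 4)
def t2 : G5 := el (swap 0 1 * swap 3 4)

def F1 : Finset G5 := {1}
def F2 : Finset G5 := {1, x2}
def F3 : Finset G5 := {1, c3, c3*c3}
def F4 : Finset G5 := {1, x2, y2, x2*y2}
def F5 : Finset G5 := {1, c5, c5*c5, c5*(c5*c5), c5*(c5*(c5*c5))}
def F6 : Finset G5 := {1, c3, c3*c3, t2, t2*c3, t2*(c3*c3)}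

def H1 : Subgroup G5 := mkSubgroup F1 (by decide) (by decide) (by decide)
def H2 : Subgroup G5 := mkSubgroup F2 (by decide) (by decide) (by decide)
def H3 : Subgroup G5 := mkSubgroup F3 (by decide) (by decide) (by decide)
def H4 : Subgroup G5 := mkSubgroup F4 (by decide) (by decide) (by decide)
def H5 : Subgroup G5 := mkSubgroup F5 (by decide) (by decide) (by decide)
def H6 : Subgroup G5 := mkSubgroup F6 (by decide) (by decide) (by decide)

lemma cardH1 : Nat.card H1 = 1 := (mkSubgroup_card _ _ _ _).trans (by decide)
lemma cardH2 : Nat.card H2 = 2 := (mkSubgroup_card _ _ _ _).trans (by decide)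
lemma cardH3 : Nat.card H3 = 3 := (mkSubgroup_card _ _ _ _).trans (by decide)
lemma cardH4 : Nat.card H4 = 4 := (mkSubgroup_card _ _ _ _).trans (by decide)
lemma cardH5 : Nat.card H5 = 5 := (mkSubgroup_card _ _ _ _).trans (by decide)
lemma cardH6 : Nat.card H6 = 6 := (mkSubgroup_card _ _ _ _).trans (by decide)

lemma cardG5 : Nat.card G5 = 60 := by
  have h := two_mul_card_alternatingGroup (α := Fin 5)
  rw [Fintype.card_perm] at h
  rw [Nat.card_eq_fintype_card]
  have h2 : Fintype.card ↥(alternatingGroup (Fin 5)) = Fintype.card G5 :=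
    Fintype.card_congr (Equiv.refl _)
  have h5 : (Fintype.card (Fin 5)).factorial = 120 := rfl
  rw [h5] at h
  omega

end A5

theorem alternatingGroup_five_inF :
    ∀ a b : ℕ, a * b = 60 →
      ∃ A B : Finset (alternatingGroup (Fin 5)), A.card = a ∧ B.card = b ∧
        IsFactorization A B := by
  intro a b hab
  have ha : a ∈ Nat.divisors 60 := Nat.mem_divisors.mpr ⟨⟨b, hab.symm⟩, by norm_num⟩
  fin_cases ha
  · exact pick_right cardG5 hab H1 cardH1
  · exact pick_right cardG5 hab H2 cardH2
  · exact pick_right cardG5 hab H3 cardH3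
  · exact pick_right cardG5 hab H4 cardH4
  · exact pick_right cardG5 hab H5 cardH5
  · exact pick_right cardG5 hab H6 cardH6
  · exact pick_left cardG5 hab H6 (cardH6.trans (by omega))
  · exact pick_left cardG5 hab H5 (cardH5.trans (by omega))
  · exact pick_left cardG5 hab H4 (cardH4.trans (by omega))
  · exact pick_left cardG5 hab H3 (cardH3.trans (by omega))
  · exact pick_left cardG5 hab H2 (cardH2.trans (by omega))
  · exact pick_left cardG5 hab H1 (cardH1.trans (by omega))
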